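/- arXiv:2105.11739 — 2 statements merged into one kernel-verified Lean document; each statement's English description precedes it below -/
import Mathlib

section
/- Let μ be a probability measure on ℝ^d with finite second moment, let φ: ℝ^d → ℝ be a convex function that is differentiable μ-almost everywhere, and set T = ∇φ. Assume the pushforward measure T_#μ also has finite second moment. Then T is an optimal transport map from μ to T_#μ for the quadratic cost: for every coupling γ of μ and T_#μ, ∫ ‖x − T(x)‖² dμ(x) ≤ ∫ ‖x − y‖² dγ(x,y). -/
open MeasureTheory ProbabilityTheory Matrix
open scoped ENNReal NNReal
open scoped RealInnerProductSpace

noncomputable section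

abbrev Ed (d : ℕ) := EuclideanSpace ℝ (Fin d)

/-- A coupling of `μ` and `ν`: a measure on the product whose marginals are `μ` and `ν`. -/
def IsCoupling {d : ℕ} (γ : Measure (Ed d × Ed d)) (μ ν : Measure (Ed d)) : Prop :=
  γ.map Prod.fst = μ ∧ γ.map Prod.snd = ν

/-- Quadratic transport cost of a coupling. -/
def cost2 {d : ℕ} (γ : Measure (Ed d × Ed d)) : ℝ≥0∞ :=
  ∫⁻ p, ENNReal.ofReal (‖p.1 - p.2‖ ^ 2) ∂γ

/-- Squared 2-Wasserstein distance. -/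
def W2sq {d : ℕ} (μ ν : Measure (Ed d)) : ℝ≥0∞ :=
  ⨅ (γ : Measure (Ed d × Ed d)) (_ : IsCoupling γ μ ν), cost2 γ

/-- 2-Wasserstein distance. -/
def W2 {d : ℕ} (μ ν : Measure (Ed d)) : ℝ :=
  Real.sqrt (W2sq μ ν).toReal

/-- Finite second moment. -/
def FiniteSecondMoment {d : ℕ} (μ : Measure (Ed d)) : Prop :=
  ∫⁻ x, ENNReal.ofReal (‖x‖ ^ 2) ∂μ < ⊤

/-- Mean vector of a measure. -/
def meanVec {d : ℕ} (μ : Measure (Ed d)) : Ed d := ∫ x, x ∂μ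

/-- Covariance matrix of a measure. -/
def covMatrix {d : ℕ} (μ : Measure (Ed d)) : Matrix (Fin d) (Fin d) ℝ :=
  Matrix.of fun i j => ∫ x, (x i - meanVec μ i) * (x j - meanVec μ j) ∂μ

/-- Positive semidefinite square root of a matrix (junk value `0` if not psd). -/
def msqrt {d : ℕ} (S : Matrix (Fin d) (Fin d) ℝ) : Matrix (Fin d) (Fin d) ℝ :=
  @dite _ S.PosSemidef (Classical.dec _) (fun h => (h.1.eigenvectorUnitary : Matrix (Fin d) (Fin d) ℝ) *
    diagonal ((RCLike.ofReal : ℝ → ℝ) ∘ Real.sqrt ∘ h.1.eigenvalues) *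
    (star h.1.eigenvectorUnitary : Matrix (Fin d) (Fin d) ℝ)) (fun _ => 0)

/-- Standard Gaussian measure on `ℝ^d`. -/
def stdGaussian (d : ℕ) : Measure (Ed d) :=
  (Measure.pi fun _ : Fin d => gaussianReal 0 1).map (EuclideanSpace.equiv (Fin d) ℝ).symm

/-- Gaussian measure on `ℝ^d` with mean `m` and covariance `S`. -/
def gaussianE {d : ℕ} (m : Ed d) (S : Matrix (Fin d) (Fin d) ℝ) : Measure (Ed d) :=
  (stdGaussian d).map fun x => m + (msqrt S).toEuclideanLin x

/-- Normal approximation: Gaussian with the same mean and covariance as `μ`. -/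
def normalApprox {d : ℕ} (μ : Measure (Ed d)) : Measure (Ed d) :=
  gaussianE (meanVec μ) (covMatrix μ)

lemma subgrad_ineq {d : ℕ} {φ : Ed d → ℝ} (hφ : ConvexOn ℝ Set.univ φ) {g x : Ed d}
    (hg : HasGradientAt φ g x) (y : Ed d) : φ x + ⟪g, y - x⟫ ≤ φ y := by
  have hL : HasDerivAt (fun t : ℝ => t • (y - x) + x) (y - x) 0 := by
    simpa using ((hasDerivAt_id (0:ℝ)).smul_const (y - x)).add_const x
  have hh : HasDerivAt (fun t : ℝ => φ (t • (y - x) + x)) ⟪g, y - x⟫ 0 := by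
    have hg' : HasFDerivAt φ ((InnerProductSpace.toDual ℝ (Ed d)) g) ((0:ℝ) • (y - x) + x) := by
      simpa using hg.hasFDerivAt
    have := hg'.comp_hasDerivAt (f := fun t : ℝ => t • (y - x) + x) 0 hL
    simpa [InnerProductSpace.toDual_apply_apply, Function.comp_def] using this
  have hconv : ConvexOn ℝ Set.univ (fun t : ℝ => φ (t • (y - x) + x)) := by
    have h := hφ.comp_affineMap (AffineMap.lineMap x y : ℝ →ᵃ[ℝ] Ed d)
    have he : ∀ t : ℝ, (AffineMap.lineMap x y : ℝ →ᵃ[ℝ] Ed d) t = t • (y - x) + x := by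
      intro t; simp [AffineMap.lineMap_apply]
    simpa [Function.comp_def, Set.preimage_univ, he] using h
  have hs := hconv.le_slope_of_hasDerivAt (Set.mem_univ (0:ℝ)) (Set.mem_univ (1:ℝ))
    one_pos hh
  rw [slope_def_field] at hs
  have h1 : ((1:ℝ)) • (y - x) + x = y := by simp
  have h0 : ((0:ℝ)) • (y - x) + x = x := by simp
  rw [h1, h0, show (1:ℝ) - 0 = 1 by norm_num, div_one] at hs
  linarith

lemma dense_le {d : ℕ} {c : Ed d → ℝ} (hc : Continuous c) {Q : ℕ → Ed d}
    (hQ : DenseRange Q) {b : ℝ} (h : ∀ n, c (Q n) ≤ b) (x : Ed d) : c x ≤ b := by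
  refine le_of_forall_pos_le_add fun ε hε => ?_
  have hU : c ⁻¹' Set.Ioi (c x - ε) ∈ nhds x :=
    hc.continuousAt.preimage_mem_nhds (Ioi_mem_nhds (by linarith))
  have hx : x ∈ closure (Set.range Q) := by rw [hQ.closure_range]; trivial
  obtain ⟨z, hz, n, rfl⟩ := mem_closure_iff_nhds.1 hx _ hU
  have : c x - ε < c (Q n) := hz
  linarith [h n]


/-- **Knott–Smith optimality criterion.**
If `T = ∇φ` `μ`-a.e. for a convex `φ`, and `T₋#μ` has finite second moment, then `T` is an
optimal transport map from `μ` to `T₋#μ` for the quadratic cost: the transport cost of `T`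
is at most the cost of any coupling of `μ` and `μ.map T`. -/
theorem knott_smith_optimality {d : ℕ} (μ : Measure (Ed d)) [IsProbabilityMeasure μ]
    (hμ : FiniteSecondMoment μ)
    (φ : Ed d → ℝ) (hφ : ConvexOn ℝ Set.univ φ)
    (T : Ed d → Ed d) (hTmeas : AEMeasurable T μ)
    (hgrad : ∀ᵐ x ∂μ, HasGradientAt φ (T x) x)
    (hν : FiniteSecondMoment (μ.map T)) :
    ∀ γ : Measure (Ed d × Ed d), IsCoupling γ μ (μ.map T) →
      ∫⁻ x, ENNReal.ofReal (‖x - T x‖ ^ 2) ∂μ ≤ cost2 γ := by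
  intro γ hγ
  obtain ⟨hγ1, hγ2⟩ := hγ
  by_cases hcost : cost2 γ = ⊤
  · rw [hcost]; exact le_top
  -- basic facts
  have hφc : Continuous φ := by
    rw [← continuousOn_univ]; exact hφ.continuousOn isOpen_univ
  -- integrability of second moments
  have nn2 : ∀ z : Ed d, (0:ℝ) ≤ ‖z‖^2 := fun z => by positivity
  have int_norm2_μ : Integrable (fun x : Ed d => ‖x‖^2) μ := by
    refine ⟨(continuous_norm.pow 2).aestronglyMeasurable, ?_⟩
    rw [hasFiniteIntegral_iff_ofReal (Filter.Eventually.of_forall nn2)]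
    exact hμ
  have int_norm2_ν : Integrable (fun x : Ed d => ‖x‖^2) (μ.map T) := by
    refine ⟨(continuous_norm.pow 2).aestronglyMeasurable, ?_⟩
    rw [hasFiniteIntegral_iff_ofReal (Filter.Eventually.of_forall nn2)]
    exact hν
  have int_Tnorm2 : Integrable (fun x => ‖T x‖^2) μ := by
    have := (integrable_map_measure (f := T) (g := fun x : Ed d => ‖x‖^2)
      (continuous_norm.pow 2).aestronglyMeasurable hTmeas).mp int_norm2_ν
    simpa [Function.comp_def] using this
  have int_fst : Integrable (fun p : Ed d × Ed d => ‖p.1‖^2) γ := by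
    have := (integrable_map_measure (f := (Prod.fst : Ed d × Ed d → Ed d))
      (g := fun x : Ed d => ‖x‖^2) (continuous_norm.pow 2).aestronglyMeasurable
      measurable_fst.aemeasurable).mp (by rw [hγ1]; exact int_norm2_μ)
    simpa [Function.comp_def] using this
  have int_snd : Integrable (fun p : Ed d × Ed d => ‖p.2‖^2) γ := by
    have := (integrable_map_measure (f := (Prod.snd : Ed d × Ed d → Ed d))
      (g := fun x : Ed d => ‖x‖^2) (continuous_norm.pow 2).aestronglyMeasurable
      measurable_snd.aemeasurable).mp (by rw [hγ2]; exact int_norm2_ν)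
    simpa [Function.comp_def] using this
  have hinner_bound : ∀ a b : Ed d, ‖⟪a, b⟫‖ ≤ ‖a‖^2 + ‖b‖^2 := by
    intro a b
    have h1 := abs_real_inner_le_norm a b
    have h2 : ‖a‖ * ‖b‖ ≤ ‖a‖^2 + ‖b‖^2 := by nlinarith [norm_nonneg a, norm_nonneg b, sq_nonneg (‖a‖ - ‖b‖)]
    calc ‖⟪a, b⟫‖ = |⟪a, b⟫| := rfl
    _ ≤ ‖a‖ * ‖b‖ := h1
    _ ≤ _ := h2
  have hinner_cont : Continuous (fun p : Ed d × Ed d => ⟪p.1, p.2⟫) := continuous_inner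
  have int_inner_γ : Integrable (fun p : Ed d × Ed d => ⟪p.1, p.2⟫) γ := by
    refine Integrable.mono (int_fst.add int_snd)
      hinner_cont.aestronglyMeasurable ?_
    refine Filter.Eventually.of_forall fun p => ?_
    simp only [Pi.add_apply]
    refine (hinner_bound p.1 p.2).trans ?_
    rw [Real.norm_eq_abs, abs_of_nonneg (by positivity)]
  have int_inner_T : Integrable (fun x => ⟪x, T x⟫) μ := by
    have hmeas : AEStronglyMeasurable (fun x => ⟪x, T x⟫) μ := by
      have : AEMeasurable (fun x => (x, T x)) μ := aemeasurable_id.prodMk hTmeas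
      exact (hinner_cont.measurable.comp_aemeasurable this).aestronglyMeasurable
    refine Integrable.mono (int_norm2_μ.add int_Tnorm2) hmeas ?_
    refine Filter.Eventually.of_forall fun x => ?_
    simp only [Pi.add_apply]
    refine (hinner_bound x (T x)).trans ?_
    rw [Real.norm_eq_abs, abs_of_nonneg (by positivity)]
  -- fixed point with gradient
  obtain ⟨x₀, hx₀⟩ := hgrad.exists
  -- integrability of φ
  have int_φ : Integrable φ μ := by
    set C : ℝ := |φ x₀| + ‖x₀‖^2 + ‖T x₀‖^2 + ‖T x₀‖ * ‖x₀‖ with hC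
    have intg : Integrable (fun x => C + 2*‖x‖^2 + 2*‖T x‖^2) μ :=
      (((integrable_const C).add (int_norm2_μ.const_mul 2)).add (int_Tnorm2.const_mul 2))
    refine Integrable.mono' intg hφc.aestronglyMeasurable ?_
    filter_upwards [hgrad] with x hx
    have h1 := subgrad_ineq hφ hx₀ x
    have h2 := subgrad_ineq hφ hx x₀
    have e1 : |⟪T x₀, x - x₀⟫| ≤ ‖T x₀‖ * ‖x - x₀‖ := abs_real_inner_le_norm _ _
    have e2 : |⟪T x, x₀ - x⟫| ≤ ‖T x‖ * ‖x₀ - x‖ := abs_real_inner_le_norm _ _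
    have n1 : ‖x - x₀‖ ≤ ‖x‖ + ‖x₀‖ := norm_sub_le _ _
    have n2 : ‖x₀ - x‖ ≤ ‖x₀‖ + ‖x‖ := norm_sub_le _ _
    have habs : |φ x₀| ≥ φ x₀ := le_abs_self _
    have habs' : -|φ x₀| ≤ φ x₀ := neg_abs_le _
    rw [Real.norm_eq_abs, abs_le]
    constructor
    · have : φ x ≥ φ x₀ - ‖T x₀‖ * (‖x‖ + ‖x₀‖) := by
        nlinarith [norm_nonneg (T x₀), norm_nonneg (x - x₀), abs_le.1 e1]
      nlinarith [norm_nonneg (T x₀), norm_nonneg x, norm_nonneg x₀,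
        sq_nonneg (‖T x₀‖ - ‖x‖), sq_nonneg (‖T x₀‖ - ‖x₀‖), sq_nonneg ‖x‖, sq_nonneg ‖T x‖]
    · have : φ x ≤ φ x₀ + ‖T x‖ * (‖x₀‖ + ‖x‖) := by
        nlinarith [abs_le.1 e2, norm_nonneg (T x), norm_nonneg (x₀ - x)]
      nlinarith [norm_nonneg (T x), norm_nonneg x, norm_nonneg x₀,
        sq_nonneg (‖T x‖ - ‖x‖), sq_nonneg (‖T x‖ - ‖x₀‖), sq_nonneg ‖x‖, sq_nonneg ‖x₀‖]
  -- Legendre-type function via a dense sequence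
  set Q : ℕ → Ed d := TopologicalSpace.denseSeq (Ed d) with hQdef
  have hQ : DenseRange Q := TopologicalSpace.denseRange_denseSeq (Ed d)
  set ψ : Ed d → ℝ := fun y => ⨆ n, (⟪Q n, y⟫ - φ (Q n)) with hψdef
  have hψmeas : Measurable ψ := by
    refine Measurable.iSup fun n => ?_
    exact ((continuous_const.inner continuous_id).sub continuous_const).measurable
  -- pointwise facts at gradient points
  have hub : ∀ x : Ed d, HasGradientAt φ (T x) x → ∀ z : Ed d,
      ⟪z, T x⟫ - φ z ≤ ⟪x, T x⟫ - φ x := by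
    intro x hx z
    have h := subgrad_ineq hφ hx z
    have : ⟪T x, z - x⟫ = ⟪z, T x⟫ - ⟪x, T x⟫ := by
      rw [inner_sub_right, real_inner_comm (T x) z, real_inner_comm (T x) x]
    linarith [h, this.le, this.ge]
  have hψT : ∀ x : Ed d, HasGradientAt φ (T x) x → ψ (T x) = ⟪x, T x⟫ - φ x := by
    intro x hx
    have hbdd : BddAbove (Set.range fun n => ⟪Q n, T x⟫ - φ (Q n)) :=
      ⟨⟪x, T x⟫ - φ x, by rintro - ⟨n, rfl⟩; exact hub x hx (Q n)⟩
    refine le_antisymm (ciSup_le fun n => hub x hx (Q n)) ?_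
    have := dense_le (c := fun z => ⟪z, T x⟫ - φ z)
      ((continuous_id.inner continuous_const).sub hφc) hQ
      (fun n => le_ciSup hbdd n) x
    exact this
  -- goodness: a measurable set of y's where ψ dominates all test points
  set S : Set (Ed d) := {y | ∀ n, ⟪Q n, y⟫ - φ (Q n) ≤ ψ y} with hSdef
  have hSmeas : MeasurableSet S := by
    rw [hSdef, Set.setOf_forall]
    refine MeasurableSet.iInter fun n => ?_
    exact measurableSet_le
      ((continuous_const.inner continuous_id).sub continuous_const).measurable hψmeas
  have hgood : ∀ y ∈ S, ∀ z : Ed d, ⟪z, y⟫ - φ z ≤ ψ y := by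
    intro y hy z
    exact dense_le (c := fun z => ⟪z, y⟫ - φ z)
      ((continuous_id.inner continuous_const).sub hφc) hQ hy z
  have hS_ae_ν : ∀ᵐ y ∂(μ.map T), y ∈ S := by
    refine (ae_map_iff hTmeas hSmeas).mpr ?_
    filter_upwards [hgrad] with x hx
    intro n
    rw [hψT x hx]
    exact hub x hx (Q n)
  have hS_ae_γ : ∀ᵐ p ∂γ, p.2 ∈ S := by
    have h5 : ∀ᵐ p ∂(γ.map Prod.snd), p ∈ S := by rw [hγ2]; exact hS_ae_ν
    exact (ae_map_iff measurable_snd.aemeasurable hSmeas).mp h5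
  -- integrability of ψ
  have hψT_eq : ∀ᵐ x ∂μ, ψ (T x) = ⟪x, T x⟫ - φ x := by
    filter_upwards [hgrad] with x hx; exact hψT x hx
  have int_ψT : Integrable (fun x => ψ (T x)) μ :=
    (int_inner_T.sub int_φ).congr (by filter_upwards [hψT_eq] with x hx; exact hx.symm)
  have int_ψν : Integrable ψ (μ.map T) :=
    (integrable_map_measure hψmeas.aestronglyMeasurable hTmeas).mpr int_ψT
  have int_ψγ : Integrable (fun p : Ed d × Ed d => ψ p.2) γ := by
    have := (integrable_map_measure (f := (Prod.snd : Ed d × Ed d → Ed d))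
      (g := ψ) hψmeas.aestronglyMeasurable measurable_snd.aemeasurable).mp
      (by rw [hγ2]; exact int_ψν)
    simpa [Function.comp_def] using this
  have int_φγ : Integrable (fun p : Ed d × Ed d => φ p.1) γ := by
    have := (integrable_map_measure (f := (Prod.fst : Ed d × Ed d → Ed d))
      (g := φ) hφc.aestronglyMeasurable measurable_fst.aemeasurable).mp
      (by rw [hγ1]; exact int_φ)
    simpa [Function.comp_def] using this
  -- the key inequality
  have key : ∫ p, ⟪p.1, p.2⟫ ∂γ ≤ ∫ x, ⟪x, T x⟫ ∂μ := by
    have h1 : ∫ p, ⟪p.1, p.2⟫ ∂γ ≤ ∫ p, (φ p.1 + ψ p.2) ∂γ := by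
      refine integral_mono_ae int_inner_γ (int_φγ.add int_ψγ) ?_
      filter_upwards [hS_ae_γ] with p hp
      have := hgood p.2 hp p.1
      linarith
    have h2 : ∫ p, (φ p.1 + ψ p.2) ∂γ = ∫ x, φ x ∂μ + ∫ y, ψ y ∂(μ.map T) := by
      rw [integral_add int_φγ int_ψγ]
      congr 1
      · rw [← hγ1, integral_map measurable_fst.aemeasurable]
        rw [hγ1]; exact hφc.aestronglyMeasurable
      · rw [← hγ2, integral_map measurable_snd.aemeasurable]
        rw [hγ2]; exact hψmeas.aestronglyMeasurable
    have h3 : ∫ y, ψ y ∂(μ.map T) = ∫ x, ψ (T x) ∂μ :=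
      integral_map hTmeas hψmeas.aestronglyMeasurable
    have h4 : ∫ x, φ x ∂μ + ∫ x, ψ (T x) ∂μ = ∫ x, ⟪x, T x⟫ ∂μ := by
      rw [← integral_add int_φ int_ψT]
      refine integral_congr_ae ?_
      filter_upwards [hψT_eq] with x hx
      rw [hx]; ring
    linarith [h1, h2 ▸ h1]
  -- expansion of the quadratic costs
  have eqT : (fun x : Ed d => ‖x - T x‖^2)
      = fun x => ‖x‖^2 - 2*⟪x, T x⟫ + ‖T x‖^2 := by
    funext x; rw [norm_sub_sq_real]
  have eqγ : (fun p : Ed d × Ed d => ‖p.1 - p.2‖^2)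
      = fun p => ‖p.1‖^2 - 2*⟪p.1, p.2⟫ + ‖p.2‖^2 := by
    funext p; rw [norm_sub_sq_real]
  have int_subT : Integrable (fun x => ‖x - T x‖^2) μ := by
    rw [eqT]
    exact (int_norm2_μ.sub (int_inner_T.const_mul 2)).add int_Tnorm2
  have int_subγ : Integrable (fun p : Ed d × Ed d => ‖p.1 - p.2‖^2) γ := by
    rw [eqγ]
    exact (int_fst.sub (int_inner_γ.const_mul 2)).add int_snd
  have expμ : ∫ x, ‖x - T x‖^2 ∂μ
      = ∫ x, ‖x‖^2 ∂μ - 2 * ∫ x, ⟪x, T x⟫ ∂μ + ∫ x, ‖T x‖^2 ∂μ := by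
    have iA : Integrable (fun x : Ed d => ‖x‖^2 - 2*⟪x, T x⟫) μ :=
      int_norm2_μ.sub (int_inner_T.const_mul 2)
    have iB : Integrable (fun x : Ed d => 2*⟪x, T x⟫) μ := int_inner_T.const_mul 2
    rw [eqT, integral_add iA int_Tnorm2, integral_sub int_norm2_μ iB, integral_const_mul]
  have expγ : ∫ p, ‖p.1 - p.2‖^2 ∂γ
      = ∫ p, ‖p.1‖^2 ∂γ - 2 * ∫ p, ⟪p.1, p.2⟫ ∂γ + ∫ p, ‖p.2‖^2 ∂γ := by
    have iA : Integrable (fun p : Ed d × Ed d => ‖p.1‖^2 - 2*⟪p.1, p.2⟫) γ :=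
      int_fst.sub (int_inner_γ.const_mul 2)
    have iB : Integrable (fun p : Ed d × Ed d => 2*⟪p.1, p.2⟫) γ := int_inner_γ.const_mul 2
    rw [eqγ, integral_add iA int_snd, integral_sub int_fst iB, integral_const_mul]
  -- marginals
  have m1a : ∫ y, ‖y‖^2 ∂(γ.map Prod.fst) = ∫ p, ‖p.1‖^2 ∂γ :=
    integral_map measurable_fst.aemeasurable
      (by rw [hγ1]; exact (continuous_norm.pow 2).aestronglyMeasurable)
  have m1 : ∫ p, ‖p.1‖^2 ∂γ = ∫ x, ‖x‖^2 ∂μ := by rw [← m1a, hγ1]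
  have m2a : ∫ y, ‖y‖^2 ∂(γ.map Prod.snd) = ∫ p, ‖p.2‖^2 ∂γ :=
    integral_map measurable_snd.aemeasurable
      (by rw [hγ2]; exact (continuous_norm.pow 2).aestronglyMeasurable)
  have m2b : ∫ y, ‖y‖^2 ∂(μ.map T) = ∫ x, ‖T x‖^2 ∂μ :=
    integral_map hTmeas (continuous_norm.pow 2).aestronglyMeasurable
  have m2 : ∫ p, ‖p.2‖^2 ∂γ = ∫ x, ‖T x‖^2 ∂μ := by rw [← m2a, hγ2, m2b]
  -- real inequality
  have hreal : ∫ x, ‖x - T x‖^2 ∂μ ≤ ∫ p, ‖p.1 - p.2‖^2 ∂γ := by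
    rw [expμ, expγ, m1, m2]; linarith
  -- conclude in ℝ≥0∞
  have lhs_eq : ∫⁻ x, ENNReal.ofReal (‖x - T x‖ ^ 2) ∂μ
      = ENNReal.ofReal (∫ x, ‖x - T x‖^2 ∂μ) :=
    (ofReal_integral_eq_lintegral_ofReal int_subT
      (Filter.Eventually.of_forall fun x => nn2 _)).symm
  have rhs_eq : cost2 γ = ENNReal.ofReal (∫ p, ‖p.1 - p.2‖^2 ∂γ) :=
    (ofReal_integral_eq_lintegral_ofReal int_subγ
      (Filter.Eventually.of_forall fun p => nn2 _)).symm
  rw [lhs_eq, rhs_eq]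
  exact ENNReal.ofReal_le_ofReal hreal


end
end

section
/- Let X and Y be random vectors in ℝ^d with finite second moments and mean zero, and assume Y = T X where T is a symmetric positive semi-definite d×d matrix. Then the linear map x ↦ Tx is an optimal transport map from the law of X to the law of Y for the quadratic cost: for every coupling γ of the laws of X and Y, E[‖X − TX‖²] ≤ ∫ ‖x − y‖² dγ(x,y). -/
open MeasureTheory ProbabilityTheory Matrix
open scoped ENNReal NNReal RealInnerProductSpace

noncomputable section

-- algebra part
section Alg
variable {d : ℕ}

lemma smul_one_posDef {ε : ℝ} (hε : 0 < ε) : (ε • (1 : Matrix (Fin d) (Fin d) ℝ)).PosDef := by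
  rw [show ε • (1 : Matrix (Fin d) (Fin d) ℝ) = Matrix.diagonal (fun _ => ε) by
    ext i j; by_cases h : i = j <;> simp [Matrix.one_apply, Matrix.diagonal_apply, h]]
  exact Matrix.posDef_diagonal_iff.mpr fun _ => hε

lemma psd_smul {M : Matrix (Fin d) (Fin d) ℝ} (hM : M.PosSemidef) {c : ℝ} (hc : 0 ≤ c) :
    (c • M).PosSemidef := by
  refine Matrix.PosSemidef.of_dotProduct_mulVec_nonneg ?_ fun x => ?_
  · unfold Matrix.IsHermitian
    rw [Matrix.conjTranspose_smul, hM.1]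
    simp
  · rw [Matrix.smul_mulVec, dotProduct_smul]
    exact mul_nonneg hc (hM.dotProduct_mulVec_nonneg x)

lemma htrans {M : Matrix (Fin d) (Fin d) ℝ} (hM : M.IsHermitian) : Mᵀ = M := by
  ext i j
  simpa [Matrix.conjTranspose_apply] using congrFun (congrFun hM i) j

lemma dot_symm (M : Matrix (Fin d) (Fin d) ℝ) (hM : M.IsHermitian) (v w : Fin d → ℝ) :
    (M *ᵥ v) ⬝ᵥ w = v ⬝ᵥ (M *ᵥ w) :=
  calc (M *ᵥ v) ⬝ᵥ w = w ⬝ᵥ (M *ᵥ v) := dotProduct_comm _ _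
    _ = (w ᵥ* M) ⬝ᵥ v := Matrix.dotProduct_mulVec _ _ _
    _ = (Mᵀ *ᵥ w) ⬝ᵥ v := by rw [Matrix.mulVec_transpose]
    _ = (M *ᵥ w) ⬝ᵥ v := by rw [htrans hM]
    _ = v ⬝ᵥ (M *ᵥ w) := dotProduct_comm _ _

lemma key1 {S : Matrix (Fin d) (Fin d) ℝ} (hS : S.PosDef) (v w : Fin d → ℝ) :
    v ⬝ᵥ w ≤ (v ⬝ᵥ (S *ᵥ v) + w ⬝ᵥ (S⁻¹ *ᵥ w)) / 2 := by
  have hdet := Matrix.isUnit_iff_isUnit_det _ |>.1 hS.isUnit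
  have h1 : S * S⁻¹ = 1 := Matrix.mul_nonsing_inv _ hdet
  have h0 := hS.posSemidef.dotProduct_mulVec_nonneg (v - S⁻¹ *ᵥ w)
  rw [star_trivial] at h0
  have hSiw : S *ᵥ (S⁻¹ *ᵥ w) = w := by
    rw [Matrix.mulVec_mulVec, h1, Matrix.one_mulVec]
  have hback : S⁻¹ *ᵥ (S *ᵥ v) = v := by
    rw [Matrix.mulVec_mulVec, Matrix.nonsing_inv_mul _ hdet, Matrix.one_mulVec]
  have hsym : (S⁻¹ *ᵥ w) ⬝ᵥ (S *ᵥ v) = w ⬝ᵥ v := by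
    rw [dot_symm _ hS.posSemidef.inv.isHermitian, hback]
  have hc1 : (S⁻¹ *ᵥ w) ⬝ᵥ w = w ⬝ᵥ (S⁻¹ *ᵥ w) := dotProduct_comm _ _
  have hc2 : w ⬝ᵥ v = v ⬝ᵥ w := dotProduct_comm _ _
  rw [Matrix.mulVec_sub, sub_dotProduct, dotProduct_sub, dotProduct_sub,
    hSiw, hsym, hc1, hc2] at h0
  linarith

lemma key2 {T : Matrix (Fin d) (Fin d) ℝ} (hT : T.PosSemidef) {ε : ℝ} (hε : 0 < ε)
    (z : Fin d → ℝ) :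
    (T *ᵥ z) ⬝ᵥ ((T + ε • 1)⁻¹ *ᵥ (T *ᵥ z)) ≤ z ⬝ᵥ (T *ᵥ z) := by
  set S := T + ε • 1 with hSdef
  have hS : S.PosDef := Matrix.PosDef.posSemidef_add hT (smul_one_posDef hε)
  have hdet := Matrix.isUnit_iff_isUnit_det _ |>.1 hS.isUnit
  have hinv1 : S⁻¹ * S = 1 := Matrix.nonsing_inv_mul _ hdet
  have hinv2 : S * S⁻¹ = 1 := Matrix.mul_nonsing_inv _ hdet
  have hTS : T * S = S * T := by
    rw [hSdef]; noncomm_ring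
  have hcomm : T * S⁻¹ = S⁻¹ * T := by
    calc T * S⁻¹ = S⁻¹ * S * (T * S⁻¹) := by rw [hinv1, Matrix.one_mul]
      _ = S⁻¹ * (S * T) * S⁻¹ := by simp only [Matrix.mul_assoc]
      _ = S⁻¹ * (T * S) * S⁻¹ := by rw [hTS]
      _ = S⁻¹ * T * (S * S⁻¹) := by simp only [Matrix.mul_assoc]
      _ = S⁻¹ * T := by rw [hinv2, Matrix.mul_one]
  have hkey : T - T * S⁻¹ * T = S⁻¹ * (ε • (Tᴴ * T) + ε ^ 2 • T) * S⁻¹ := by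
    have hH : Tᴴ = T := hT.isHermitian
    rw [hH]
    have h1 : T * S⁻¹ * T = S⁻¹ * (T * T) := by
      rw [hcomm, Matrix.mul_assoc]
    have h2 : T - S⁻¹ * (T * T) = S⁻¹ * (S * T - T * T) := by
      rw [Matrix.mul_sub, ← Matrix.mul_assoc S⁻¹ S T, hinv1, Matrix.one_mul]
    have h3 : S * T - T * T = ε • T := by
      rw [hSdef, Matrix.add_mul, Matrix.smul_mul, Matrix.one_mul]; abel
    have h4 : (ε • T : Matrix _ _ ℝ) = (ε • (T * T) + ε ^ 2 • T) * S⁻¹ := by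
      have hε2 : ε • (T * T) + ε ^ 2 • T = (ε • T) * S := by
        rw [hSdef, smul_mul_assoc, Matrix.mul_add, mul_smul_comm, Matrix.mul_one, smul_add,
          smul_smul]
        congr 1
        rw [sq]
      rw [hε2, Matrix.mul_assoc, hinv2, Matrix.mul_one]
    rw [h1, h2, h3, h4, Matrix.mul_assoc]
  have hpsd : (T - T * S⁻¹ * T).PosSemidef := by
    rw [hkey]
    have hM : (ε • (Tᴴ * T) + ε ^ 2 • T).PosSemidef :=
      (psd_smul (Matrix.posSemidef_conjTranspose_mul_self T) hε.le).add
        (psd_smul hT (by positivity))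
    have := hM.mul_mul_conjTranspose_same S⁻¹
    rwa [hS.posSemidef.inv.isHermitian] at this
  have h0 := hpsd.dotProduct_mulVec_nonneg z
  rw [star_trivial, Matrix.sub_mulVec, dotProduct_sub, sub_nonneg] at h0
  calc (T *ᵥ z) ⬝ᵥ (S⁻¹ *ᵥ (T *ᵥ z)) = z ⬝ᵥ (T *ᵥ (S⁻¹ *ᵥ (T *ᵥ z))) := by
        rw [dot_symm _ hT.isHermitian]
    _ = z ⬝ᵥ ((T * S⁻¹ * T) *ᵥ z) := by
        rw [Matrix.mulVec_mulVec, Matrix.mulVec_mulVec]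
    _ ≤ z ⬝ᵥ (T *ᵥ z) := h0

-- bridge
lemma inner_eq_dot (x y : Ed d) :
    ⟪x, y⟫ = (WithLp.equiv 2 _ x) ⬝ᵥ (WithLp.equiv 2 _ y) := by
  rw [EuclideanSpace.inner_eq_star_dotProduct, star_trivial]; exact dotProduct_comm _ _

lemma equiv_toEuclideanLin (M : Matrix (Fin d) (Fin d) ℝ) (x : Ed d) :
    WithLp.equiv 2 _ (M.toEuclideanLin x) = M *ᵥ (WithLp.equiv 2 _ x) :=
  Matrix.ofLp_toEuclideanLin_apply M x

end Alg

-- integrability helpers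
section Int
variable {d : ℕ} {μ : Measure (Ed d)}

lemma integrable_of_sq {α : Type*} [MeasurableSpace α] {ρ : Measure α} {f : α → ℝ}
    (hm : AEStronglyMeasurable f ρ) (h0 : ∀ a, 0 ≤ f a)
    (h : ∫⁻ a, ENNReal.ofReal (f a) ∂ρ ≠ ⊤) : Integrable f ρ := by
  refine ⟨hm, ?_⟩
  rw [hasFiniteIntegral_iff_norm]
  refine lt_of_le_of_lt (le_of_eq (lintegral_congr fun a => ?_)) h.lt_top
  rw [Real.norm_of_nonneg (h0 a)]

lemma quad_integrable (h2 : Integrable (fun x : Ed d => ‖x‖ ^ 2) μ)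
    (A B : Ed d →L[ℝ] Ed d) : Integrable (fun x => ⟪A x, B x⟫) μ := by
  refine Integrable.mono (h2.const_mul (‖A‖ * ‖B‖)) ?_ (Filter.Eventually.of_forall fun x => ?_)
  · exact (A.continuous.inner B.continuous).aestronglyMeasurable
  · rw [Real.norm_eq_abs]
    refine le_trans (abs_real_inner_le_norm _ _) ?_
    calc ‖A x‖ * ‖B x‖ ≤ (‖A‖ * ‖x‖) * (‖B‖ * ‖x‖) :=
          mul_le_mul (A.le_opNorm x) (B.le_opNorm x) (norm_nonneg _)
            (mul_nonneg (norm_nonneg _) (norm_nonneg _))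
      _ = ‖A‖ * ‖B‖ * ‖x‖ ^ 2 := by ring
      _ ≤ ‖‖A‖ * ‖B‖ * ‖x‖ ^ 2‖ := le_abs_self _
end Int

/-- If `Y = T X` for a symmetric positive semi-definite matrix `T` and mean-zero `X`, then
`x ↦ T x` is an optimal transport map from the law of `X` to the law of `Y` for quadratic
cost. -/
theorem psd_linear_map_is_optimal {d : ℕ} (μ : Measure (Ed d)) [IsProbabilityMeasure μ]
    (hμ : FiniteSecondMoment μ) (hmean : meanVec μ = 0)
    (T : Matrix (Fin d) (Fin d) ℝ) (hT : T.PosSemidef) :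
    ∀ γ : Measure (Ed d × Ed d),
      IsCoupling γ μ (μ.map fun x => T.toEuclideanLin x) →
      ∫⁻ x, ENNReal.ofReal (‖x - T.toEuclideanLin x‖ ^ 2) ∂μ ≤ cost2 γ := by
  intro γ ⟨hγ1, hγ2⟩
  -- trivial case
  rcases eq_or_ne (cost2 γ) ⊤ with htop | hfin
  · rw [htop]; exact le_top
  -- continuous linear map versions
  set L : Ed d →L[ℝ] Ed d := LinearMap.toContinuousLinearMap T.toEuclideanLin with hLdef
  have hLapp : ∀ x, L x = T.toEuclideanLin x := fun x => rfl
  have hLmeas : Measurable fun x : Ed d => T.toEuclideanLin x := L.continuous.measurable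
  -- basic integrability over μ
  have h2 : Integrable (fun x : Ed d => ‖x‖ ^ 2) μ := by
    refine integrable_of_sq ?_ (fun a => by positivity) hμ.ne
    exact (continuous_norm.pow 2).aestronglyMeasurable
  have hid : Integrable (fun x : Ed d => ⟪x, L x⟫) μ :=
    quad_integrable h2 (ContinuousLinearMap.id ℝ _) L
  have hLL : Integrable (fun x : Ed d => ⟪L x, L x⟫) μ := quad_integrable h2 L L
  have hLnorm : Integrable (fun x : Ed d => ‖L x‖ ^ 2) μ := by
    refine hLL.congr (Filter.Eventually.of_forall fun x => ?_)
    exact real_inner_self_eq_norm_sq (L x)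
  -- integrability over γ via marginals
  have hfst : Measurable (Prod.fst : Ed d × Ed d → Ed d) := measurable_fst
  have hsnd : Measurable (Prod.snd : Ed d × Ed d → Ed d) := measurable_snd
  have hmap1 : ∀ (g : Ed d → ℝ), Integrable g μ → AEStronglyMeasurable g μ →
      Integrable (fun p : Ed d × Ed d => g p.1) γ := by
    intro g hg hgm
    have := (integrable_map_measure (by rwa [hγ1]) hfst.aemeasurable).mp (hγ1 ▸ hg)
    exact this
  have hmap2 : ∀ (g : Ed d → ℝ), Integrable g (μ.map fun x => T.toEuclideanLin x) →
      Integrable (fun p : Ed d × Ed d => g p.2) γ := by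
    intro g hg
    have hgm : AEStronglyMeasurable g (γ.map Prod.snd) := by rw [hγ2]; exact hg.1
    exact (integrable_map_measure hgm hsnd.aemeasurable).mp (hγ2 ▸ hg)
  -- integrability over ν := μ.map L
  have hmapν : ∀ (g : Ed d → ℝ), AEStronglyMeasurable g (μ.map fun x => T.toEuclideanLin x) →
      (Integrable g (μ.map fun x => T.toEuclideanLin x)
        ↔ Integrable (fun x => g (T.toEuclideanLin x)) μ) :=
    fun g hgm => integrable_map_measure hgm hLmeas.aemeasurable
  have hν2 : Integrable (fun y : Ed d => ‖y‖ ^ 2) (μ.map fun x => T.toEuclideanLin x) := by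
    refine (hmapν _ (continuous_norm.pow 2).aestronglyMeasurable).mpr ?_
    simpa only [hLapp, Pi.pow_apply] using hLnorm
  have hf1 : Integrable (fun p : Ed d × Ed d => ‖p.1‖ ^ 2) γ :=
    hmap1 _ h2 h2.1
  have hf2 : Integrable (fun p : Ed d × Ed d => ‖p.2‖ ^ 2) γ :=
    hmap2 _ hν2
  have hinner : Integrable (fun p : Ed d × Ed d => ⟪p.1, p.2⟫) γ := by
    refine Integrable.mono ((hf1.add hf2).const_mul (1 / 2)) ?_
      (Filter.Eventually.of_forall fun p => ?_)
    · exact (continuous_fst.inner continuous_snd).aestronglyMeasurable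
    · rw [Real.norm_eq_abs]
      refine le_trans (abs_real_inner_le_norm _ _) ?_
      have hn : ‖(1 / 2 : ℝ) * (‖p.1‖ ^ 2 + ‖p.2‖ ^ 2)‖ = 1 / 2 * (‖p.1‖ ^ 2 + ‖p.2‖ ^ 2) :=
        Real.norm_of_nonneg (by positivity)
      calc ‖p.1‖ * ‖p.2‖ ≤ 1 / 2 * (‖p.1‖ ^ 2 + ‖p.2‖ ^ 2) := by
            nlinarith [sq_nonneg (‖p.1‖ - ‖p.2‖)]
        _ = _ := hn.symm
  -- cost is integrable
  have hcost : Integrable (fun p : Ed d × Ed d => ‖p.1 - p.2‖ ^ 2) γ := by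
    refine integrable_of_sq ?_ (fun p => by positivity) hfin
    exact ((continuous_fst.sub continuous_snd).norm.pow 2).aestronglyMeasurable
  -- marginal integral identities
  have hint1 : ∫ p : Ed d × Ed d, ‖p.1‖ ^ 2 ∂γ = ∫ x, ‖x‖ ^ 2 ∂μ := by
    rw [← hγ1, integral_map hfst.aemeasurable]
    rw [hγ1]; exact h2.1
  have hint2 : ∫ p : Ed d × Ed d, ‖p.2‖ ^ 2 ∂γ = ∫ x, ‖L x‖ ^ 2 ∂μ := by
    have e1 : ∫ y, ‖y‖ ^ 2 ∂(μ.map fun x => T.toEuclideanLin x) = ∫ x, ‖L x‖ ^ 2 ∂μ := by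
      rw [integral_map hLmeas.aemeasurable (f := fun y : Ed d => ‖y‖ ^ 2)
        (continuous_norm.pow 2).aestronglyMeasurable]
      rfl
    have e2 : ∫ p : Ed d × Ed d, ‖p.2‖ ^ 2 ∂γ = ∫ y, ‖y‖ ^ 2 ∂(γ.map Prod.snd) :=
      (integral_map hsnd.aemeasurable (continuous_norm.pow 2).aestronglyMeasurable).symm
    rw [e2, hγ2, e1]
  -- the key inequality: ∫ ⟪p.1, p.2⟫ dγ ≤ ∫ ⟪x, L x⟫ dμ
  have hkey : ∫ p : Ed d × Ed d, ⟪p.1, p.2⟫ ∂γ ≤ ∫ x, ⟪x, L x⟫ ∂μ := by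
    refine le_of_forall_pos_le_add fun ε hε => ?_
    set c : ℝ := ∫ x, ‖x‖ ^ 2 ∂μ with hc
    have hc0 : 0 ≤ c := integral_nonneg fun x => by positivity
    set ε' : ℝ := ε / (c + 1) with hε'
    have hε'0 : 0 < ε' := div_pos hε (by linarith)
    set S : Matrix (Fin d) (Fin d) ℝ := T + ε' • 1 with hSdef
    have hS : S.PosDef := Matrix.PosDef.posSemidef_add hT (smul_one_posDef hε'0)
    set A : Ed d →L[ℝ] Ed d := LinearMap.toContinuousLinearMap S.toEuclideanLin with hAdef
    set B : Ed d →L[ℝ] Ed d := LinearMap.toContinuousLinearMap S⁻¹.toEuclideanLin with hBdef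
    have hAapp : ∀ x, A x = S.toEuclideanLin x := fun x => rfl
    have hBapp : ∀ x, B x = S⁻¹.toEuclideanLin x := fun x => rfl
    -- integrable pieces
    have hA : Integrable (fun x : Ed d => ⟪x, A x⟫) μ :=
      quad_integrable h2 (ContinuousLinearMap.id ℝ _) A
    have hBL : Integrable (fun x : Ed d => ⟪L x, B (L x)⟫) μ := by
      have := quad_integrable h2 L (B.comp L)
      simpa using this
    have hAγ : Integrable (fun p : Ed d × Ed d => ⟪p.1, A p.1⟫) γ :=
      hmap1 _ hA hA.1
    have hBγ : Integrable (fun p : Ed d × Ed d => ⟪p.2, B p.2⟫) γ := by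
      refine hmap2 (fun y => ⟪y, B y⟫) ?_
      refine (hmapν _ ?_).mpr ?_
      · exact (continuous_id.inner B.continuous).aestronglyMeasurable
      · simpa only [hLapp] using hBL
    -- pointwise bound under γ
    have hpt : ∀ p : Ed d × Ed d, ⟪p.1, p.2⟫ ≤ (⟪p.1, A p.1⟫ + ⟪p.2, B p.2⟫) / 2 := by
      intro p
      have := key1 hS (WithLp.equiv 2 _ p.1) (WithLp.equiv 2 _ p.2)
      rw [inner_eq_dot, inner_eq_dot, inner_eq_dot, hAapp, hBapp,
        equiv_toEuclideanLin, equiv_toEuclideanLin]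
      exact this
    have step1 : ∫ p : Ed d × Ed d, ⟪p.1, p.2⟫ ∂γ
        ≤ (∫ p : Ed d × Ed d, ⟪p.1, A p.1⟫ ∂γ + ∫ p : Ed d × Ed d, ⟪p.2, B p.2⟫ ∂γ) / 2 := by
      rw [← integral_add hAγ hBγ, ← integral_div]
      exact integral_mono hinner ((hAγ.add hBγ).div_const 2) fun p => hpt p
    -- transfer marginals
    have hm1 : ∫ p : Ed d × Ed d, ⟪p.1, A p.1⟫ ∂γ = ∫ x, ⟪x, A x⟫ ∂μ := by
      rw [← hγ1, integral_map hfst.aemeasurable]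
      rw [hγ1]; exact hA.1
    have hm2 : ∫ p : Ed d × Ed d, ⟪p.2, B p.2⟫ ∂γ = ∫ x, ⟪L x, B (L x)⟫ ∂μ := by
      have e1 : ∫ y, ⟪y, B y⟫ ∂(μ.map fun x => T.toEuclideanLin x) = ∫ x, ⟪L x, B (L x)⟫ ∂μ := by
        rw [integral_map hLmeas.aemeasurable (continuous_id.inner B.continuous).aestronglyMeasurable]
        rfl
      have e2 : ∫ p : Ed d × Ed d, ⟪p.2, B p.2⟫ ∂γ = ∫ y, ⟪y, B y⟫ ∂(γ.map Prod.snd) :=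
        (integral_map (f := fun y : Ed d => ⟪y, B y⟫) hsnd.aemeasurable
          (continuous_id.inner B.continuous).aestronglyMeasurable).symm
      rw [e2, hγ2, e1]
    -- second moment bound : ∫ ⟪Lx, B (L x)⟫ ≤ ∫ ⟪x, L x⟫
    have step2 : ∫ x, ⟪L x, B (L x)⟫ ∂μ ≤ ∫ x, ⟪x, L x⟫ ∂μ := by
      refine integral_mono hBL hid fun x => ?_
      have := key2 hT hε'0 (WithLp.equiv 2 _ x)
      rw [hLapp, hBapp, inner_eq_dot, inner_eq_dot, equiv_toEuclideanLin, equiv_toEuclideanLin,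
        equiv_toEuclideanLin]
      exact this
    -- A-expansion : ⟪x, A x⟫ = ⟪x, L x⟫ + ε' * ‖x‖²
    have step3 : ∫ x, ⟪x, A x⟫ ∂μ = ∫ x, ⟪x, L x⟫ ∂μ + ε' * c := by
      have hpt3 : ∀ x : Ed d, ⟪x, A x⟫ = ⟪x, L x⟫ + ε' * ‖x‖ ^ 2 := by
        intro x
        rw [hAapp, hLapp, inner_eq_dot, inner_eq_dot, equiv_toEuclideanLin, equiv_toEuclideanLin]
        rw [hSdef, Matrix.add_mulVec, dotProduct_add, Matrix.smul_mulVec,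
          Matrix.one_mulVec, dotProduct_smul]
        congr 1
        rw [smul_eq_mul]
        congr 1
        rw [← real_inner_self_eq_norm_sq, inner_eq_dot]
      calc ∫ x, ⟪x, A x⟫ ∂μ = ∫ x, (⟪x, L x⟫ + ε' * ‖x‖ ^ 2) ∂μ := by
            exact integral_congr_ae (Filter.Eventually.of_forall hpt3)
        _ = ∫ x, ⟪x, L x⟫ ∂μ + ε' * c := by
            rw [integral_add hid (h2.const_mul ε'), integral_const_mul]
    -- combine
    have hεbound : ε' * c / 2 ≤ ε := by
      rw [hε', div_mul_eq_mul_div, div_div]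
      rw [div_le_iff₀ (by linarith)]
      nlinarith
    calc ∫ p : Ed d × Ed d, ⟪p.1, p.2⟫ ∂γ
        ≤ (∫ x, ⟪x, A x⟫ ∂μ + ∫ x, ⟪L x, B (L x)⟫ ∂μ) / 2 := by
          rw [← hm1, ← hm2]; exact step1
      _ ≤ ((∫ x, ⟪x, L x⟫ ∂μ + ε' * c) + ∫ x, ⟪x, L x⟫ ∂μ) / 2 := by
          rw [step3]; linarith [step2]
      _ = ∫ x, ⟪x, L x⟫ ∂μ + ε' * c / 2 := by ring
      _ ≤ ∫ x, ⟪x, L x⟫ ∂μ + ε := by linarith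
  -- expansion of both costs
  have hLHS : Integrable (fun x : Ed d => ‖x - T.toEuclideanLin x‖ ^ 2) μ := by
    have := quad_integrable h2 (ContinuousLinearMap.id ℝ _ - L) (ContinuousLinearMap.id ℝ _ - L)
    refine this.congr (Filter.Eventually.of_forall fun x => ?_)
    exact real_inner_self_eq_norm_sq (x - L x)
  have hLHSval : ∫ x, ‖x - T.toEuclideanLin x‖ ^ 2 ∂μ
      = ∫ x, ‖x‖ ^ 2 ∂μ - 2 * ∫ x, ⟪x, L x⟫ ∂μ + ∫ x, ‖L x‖ ^ 2 ∂μ := by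
    have hpt : ∀ x : Ed d, ‖x - T.toEuclideanLin x‖ ^ 2
        = ‖x‖ ^ 2 - 2 * ⟪x, L x⟫ + ‖L x‖ ^ 2 := by
      intro x
      rw [← hLapp x, norm_sub_sq_real]
    rw [integral_congr_ae (Filter.Eventually.of_forall hpt), integral_add (by
        exact (h2.sub (hid.const_mul 2))) hLnorm, integral_sub h2 (hid.const_mul 2),
      integral_const_mul]
  have hRHSval : ∫ p : Ed d × Ed d, ‖p.1 - p.2‖ ^ 2 ∂γ
      = ∫ x, ‖x‖ ^ 2 ∂μ - 2 * ∫ p : Ed d × Ed d, ⟪p.1, p.2⟫ ∂γ + ∫ x, ‖L x‖ ^ 2 ∂μ := by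
    have hpt : ∀ p : Ed d × Ed d, ‖p.1 - p.2‖ ^ 2
        = ‖p.1‖ ^ 2 - 2 * ⟪p.1, p.2⟫ + ‖p.2‖ ^ 2 := fun p => norm_sub_sq_real _ _
    rw [integral_congr_ae (Filter.Eventually.of_forall hpt), integral_add (by
        exact (hf1.sub (hinner.const_mul 2))) hf2, integral_sub hf1 (hinner.const_mul 2),
      integral_const_mul, hint1, hint2]
  -- conclude
  have hreal : ∫ x, ‖x - T.toEuclideanLin x‖ ^ 2 ∂μ ≤ ∫ p : Ed d × Ed d, ‖p.1 - p.2‖ ^ 2 ∂γ := by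
    rw [hLHSval, hRHSval]; linarith
  calc ∫⁻ x, ENNReal.ofReal (‖x - T.toEuclideanLin x‖ ^ 2) ∂μ
      = ENNReal.ofReal (∫ x, ‖x - T.toEuclideanLin x‖ ^ 2 ∂μ) :=
        (ofReal_integral_eq_lintegral_ofReal hLHS
          (Filter.Eventually.of_forall fun x => by positivity)).symm
    _ ≤ ENNReal.ofReal (∫ p : Ed d × Ed d, ‖p.1 - p.2‖ ^ 2 ∂γ) :=
        ENNReal.ofReal_le_ofReal hreal
    _ = cost2 γ := ofReal_integral_eq_lintegral_ofReal hcost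
        (Filter.Eventually.of_forall fun p => by positivity)


end
end
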